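/- arXiv:2101.00437 — 3 statements merged into one kernel-verified Lean document; each statement's English description precedes it below -/
import Mathlib

section
/- Let M be a locally open-convex compact topological median algebra, and let U, C ⊆ M be disjoint nonempty convex sets with U open and C closed. Then there exists an open half-space 𝔥 with U ⊆ 𝔥 and C ⊆ M \ 𝔥. -/
def MedInterval {M : Type*} (m : M → M → M → M) (x y : M) : Set M := {u | m x y u = u}

def MedConvex {M : Type*} (m : M → M → M → M) (C : Set M) : Prop :=
  ∀ x ∈ C, ∀ y ∈ C, MedInterval m x y ⊆ C

def IsMedian {M : Type*} (m : M → M → M → M) : Prop :=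
  (∀ x y z, m x y z = m x z y) ∧ (∀ x y z, m x y z = m y x z) ∧
  (∀ x y, m x x y = x) ∧
  (∀ x y z u v, m (m x y z) u v = m x (m y u v) (m z u v))

section Toolkit
variable {M : Type*} {m : M → M → M → M}

lemma med_r2 (hm : IsMedian m) (x y z : M) : m x y z = m x z y := hm.1 x y z
lemma med_r1 (hm : IsMedian m) (x y z : M) : m x y z = m y x z := hm.2.1 x y z
lemma med_i1 (hm : IsMedian m) (x y : M) : m x x y = x := hm.2.2.1 x y
lemma med_d (hm : IsMedian m) (x y z u v : M) :
    m (m x y z) u v = m x (m y u v) (m z u v) := hm.2.2.2 x y z u v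

lemma med_rot (hm : IsMedian m) (x y z : M) : m x y z = m z x y := by
  rw [med_r1 hm x y z, med_r2 hm y x z, med_r1 hm y z x, med_r2 hm z y x]

lemma med_i3 (hm : IsMedian m) (x y : M) : m x y x = x := by
  rw [med_r2 hm x y x, med_i1 hm x y]

lemma med_i2 (hm : IsMedian m) (x y : M) : m x y y = y := by
  rw [med_r1 hm x y y, med_i3 hm y x]

lemma med_f2 (hm : IsMedian m) (x y w : M) : m x y (m x y w) = m x y w := by
  rw [med_rot hm x y w, med_rot hm x y (m w x y),
    med_d hm w x y x y, med_i1 hm x y, med_i3 hm y x]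

/-- c ∈ [x,y], w ∈ [x,c] ⇒ w ∈ [x,y] -/
lemma med_L4 (hm : IsMedian m) {x y c w : M}
    (hc : m x y c = c) (hw : m x c w = w) : m x y w = w := by
  have hA : m x c w = m x (m x y w) w := by
    conv_lhs => rw [← hc]
    rw [med_r1 hm x (m x y c) w, med_d hm x y c x w,
      med_r1 hm y x w, med_r1 hm c x w, hw]
  have hA' : m x (m x y w) w = w := hA.symm.trans hw
  have hB : m (m x y w) y w = m x y w := by
    rw [med_d hm x y w y w, med_i1 hm y w, med_i3 hm w y]
  have hC : m x (m x y w) w = m x y w := by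
    conv_lhs => rw [← hB]
    rw [med_r1 hm x (m (m x y w) y w) w, med_d hm (m x y w) y w x w,
      med_r1 hm y x w, med_i3 hm w x, med_i1 hm (m x y w) w]
  exact hC.symm.trans hA'

/-- u,v ∈ [x,y], w ∈ [u,v] ⇒ w ∈ [x,y] -/
lemma med_L3 (hm : IsMedian m) {x y u v w : M}
    (hu : m x y u = u) (hv : m x y v = v) (hw : m u v w = w) : m x y w = w := by
  have hβ : m x y (m y v w) = m y v w := by
    conv_rhs => rw [← hv]
    rw [med_r1 hm y (m x y v) w, med_d hm x y v y w, med_i1 hm y w, med_r1 hm v y w]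
  have hw' : m x (m y v w) w = w := by
    conv_rhs => rw [← hw]
    conv_rhs => rw [← hu]
    rw [med_d hm x y u v w, hw]
  exact med_L4 hm hβ hw'

lemma med_L6 (hm : IsMedian m) {x y p t : M}
    (h1 : m x p t = t) (h2 : m y p t = t) : m (m x y p) p t = t := by
  rw [med_d hm x y p p t, h2, med_i1 hm p t, med_r2 hm x t p, h1]

lemma med_F5 (hm : IsMedian m) {x y z r : M}
    (h1 : m x y r = r) (h2 : m y z r = r) (h3 : m z x r = r) : r = m x y z := by
  have rx : m x (m x y z) r = r := by
    conv_rhs => rw [← h3]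
    conv_rhs => rw [← h1]
    rw [med_rot hm z x (m x y r), med_d hm x y r z x,
      med_rot hm y z x, ← med_rot hm z x r, h3]
  have ry : m y (m x y z) r = r := by
    conv_rhs => rw [← h1]
    conv_rhs => rw [← h2]
    rw [med_rot hm x y (m y z r), med_d hm y z r x y,
      ← med_rot hm x y z, ← med_rot hm x y r, h1]
  have h := med_L6 hm rx ry
  rw [med_f2 hm x y z, med_i1 hm (m x y z) r] at h
  exact h.symm

/-- gate lemma: u ∈ [x,y] ⇒ m x y t ∈ [t,u] -/
lemma med_L8 (hm : IsMedian m) {x y u : M} (hu : m x y u = u) (t : M) :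
    m t u (m x y t) = m x y t := by
  have hGtx : m t x (m x y t) = m x y t := by
    rw [med_rot hm x y t]
    exact med_f2 hm t x y
  have hGty : m t y (m x y t) = m x y t := by
    rw [med_r1 hm x y t, med_rot hm y x t]
    exact med_f2 hm t y x
  have hG'tG : m t (m x y t) (m t u (m x y t)) = m t u (m x y t) := by
    rw [med_r2 hm t u (m x y t)]
    exact med_f2 hm t (m x y t) u
  have hG'tx : m t x (m t u (m x y t)) = m t u (m x y t) := med_L4 hm hGtx hG'tG
  have hG'ty : m t y (m t u (m x y t)) = m t u (m x y t) := med_L4 hm hGty hG'tG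
  have hGxy : m x y (m x y t) = m x y t := med_f2 hm x y t
  have hG'uG : m u (m x y t) (m t u (m x y t)) = m t u (m x y t) := by
    rw [med_r1 hm t u (m x y t), med_r2 hm u t (m x y t)]
    exact med_f2 hm u (m x y t) t
  have hG'xy : m x y (m t u (m x y t)) = m t u (m x y t) := med_L3 hm hu hGxy hG'uG
  have h2' : m y t (m t u (m x y t)) = m t u (m x y t) := by
    rw [med_r1 hm y t (m t u (m x y t))]; exact hG'ty
  exact med_F5 hm hG'xy h2' hG'tx

lemma med_L11 (hm : IsMedian m) {x a t B : M}
    (h1 : m x a t = t) (h2 : m t a B = B) : m x B t = t := by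
  conv_lhs => rw [← h2]
  rw [med_r1 hm x (m t a B) t, med_d hm t a B x t, med_r1 hm a x t, h1,
    med_i1 hm t (m B x t)]

/-- join with a point is convex -/
lemma med_Q2deg (hm : IsMedian m) {k₁ k₂ a z₁ z₂ t : M}
    (h1 : m k₁ a z₁ = z₁) (h2 : m k₂ a z₂ = z₂) (ht : m z₁ z₂ t = t) :
    m (m k₁ k₂ t) a t = t := by
  have hA : m k₂ a (m a z₂ t) = m a z₂ t := by
    conv_rhs => rw [← h2]
    rw [med_r1 hm a (m k₂ a z₂) t, med_d hm k₂ a z₂ a t, med_i1 hm a t,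
      med_r1 hm z₂ a t]
  have htA : m k₁ (m a z₂ t) t = t := by
    conv_rhs => rw [← ht]
    conv_rhs => rw [← h1]
    rw [med_d hm k₁ a z₁ z₂ t, ht]
  have hB : m t (m a z₂ t) (m k₂ a t) = m k₂ a t := med_L8 hm hA t
  have h11 : m k₁ (m k₂ a t) t = t := med_L11 hm htA hB
  rw [med_d hm k₁ k₂ t a t, med_i3 hm t a]
  exact h11

lemma med_L9 (hm : IsMedian m) {h a p s : M}
    (h1 : m h a p = p) (h2 : m a p s = s) : m h s p = p := by
  have htap : m a p (m h s p) = m h s p := by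
    conv_rhs => rw [← h2]
    rw [med_r1 hm h (m a p s) p, med_d hm a p s h p, med_i3 hm p h,
      med_r1 hm s h p]
  have hthp : m h p (m h s p) = m h s p := by
    rw [med_r2 hm h s p]
    exact med_f2 hm h p s
  have h6 := med_L6 hm hthp htap
  rw [h1, med_i1 hm p (m h s p)] at h6
  exact h6.symm

lemma med_Q (hm : IsMedian m) {h k a b p w : M}
    (h1 : m h a p = p) (h2 : m k b p = p) (h3 : m a b w = w) :
    m (m h k p) w p = p := by
  have hs : m a p (m k w p) = m k w p := by
    conv_rhs => rw [← h3]
    rw [med_r1 hm k (m a b w) p, med_d hm a b w k p, med_r1 hm b k p, h2,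
      med_r1 hm w k p]
  have h9 : m h (m k w p) p = p := med_L9 hm h1 hs
  rw [med_d hm h k p w p, med_i3 hm p w]
  exact h9

lemma med_a (hm : IsMedian m) {u w q k a : M}
    (hq : m u w q = q) (hu : m k a u = u) : m k (m a w q) q = q := by
  conv_rhs => rw [← hq]
  conv_rhs => rw [← hu]
  rw [med_d hm k a u w q, hq]

lemma med_L12 (hm : IsMedian m) {a b w : M} (h3 : m a b w = w) (q : M) :
    m (m a w q) (m b w q) w = w := by
  have st1 : m (m a w q) (m b w q) w = m a w (m b w q) := by
    rw [med_d hm a w q (m b w q) w, med_i3 hm w (m b w q)]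
    have hγ : m q (m b w q) w = m b w q := by
      rw [med_r1 hm q (m b w q) w, med_d hm b w q q w, med_i3 hm w q,
        med_i1 hm q w]
    rw [hγ]
  have st2 : m a w (m b w q) = m b w (m a w q) := by
    rw [med_rot hm a w (m b w q), med_d hm b w q a w, med_i3 hm w a,
      med_r1 hm q a w, med_r2 hm a q w]
  have st3 : m a b (m b w (m a w q)) = m b w (m a w q) := by
    have e : m b w (m a w q) = m b (m a b w) (m a w q) := by rw [h3]
    rw [e, med_r1 hm b (m a b w) (m a w q), med_d hm a b w b (m a w q),
      med_i1 hm b (m a w q), med_r1 hm w b (m a w q)]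
    exact med_f2 hm a b (m b w (m a w q))
  have mem1 : m a w (m a w (m b w q)) = m a w (m b w q) := med_f2 hm a w (m b w q)
  have mem2 : m b w (m b w (m a w q)) = m b w (m a w q) := med_f2 hm b w (m a w q)
  have hwa : m w a (m b w (m a w q)) = m b w (m a w q) := by
    rw [med_r1 hm w a (m b w (m a w q)), ← st2]
    exact mem1
  have h5 := med_F5 hm st3 mem2 hwa
  calc m (m a w q) (m b w q) w = m a w (m b w q) := st1
    _ = m b w (m a w q) := st2
    _ = m a b w := h5
    _ = w := h3

lemma med_Q' (hm : IsMedian m) {k₁ k₂ a b u₁ u₂ w : M}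
    (h1 : m k₁ a u₁ = u₁) (h2 : m k₂ b u₂ = u₂) (h3 : m a b w = w) :
    m (m k₁ k₂ (m u₁ u₂ w)) w (m u₁ u₂ w) = m u₁ u₂ w := by
  have hq1 : m u₁ w (m u₁ u₂ w) = m u₁ u₂ w := by
    rw [med_r2 hm u₁ u₂ w]
    exact med_f2 hm u₁ w u₂
  have hq2 : m u₂ w (m u₁ u₂ w) = m u₁ u₂ w := by
    rw [med_r1 hm u₁ u₂ w, med_r2 hm u₂ u₁ w]
    exact med_f2 hm u₂ w u₁
  have ha1 : m k₁ (m a w (m u₁ u₂ w)) (m u₁ u₂ w) = m u₁ u₂ w := med_a hm hq1 h1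
  have ha2 : m k₂ (m b w (m u₁ u₂ w)) (m u₁ u₂ w) = m u₁ u₂ w := med_a hm hq2 h2
  have hl12 : m (m a w (m u₁ u₂ w)) (m b w (m u₁ u₂ w)) w = w :=
    med_L12 hm h3 (m u₁ u₂ w)
  exact med_Q hm ha1 ha2 hl12

end Toolkit


def IsHalfSpace {M : Type*} (m : M → M → M → M) (h : Set M) : Prop :=
  MedConvex m h ∧ MedConvex m hᶜ ∧ h.Nonempty ∧ hᶜ.Nonempty

/-- Every point has a neighborhood basis of open convex sets. -/
def LocOpenConvex {M : Type*} [TopologicalSpace M] (m : M → M → M → M) : Prop :=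
  ∀ x : M, ∀ U ∈ nhds x, ∃ V : Set M, IsOpen V ∧ MedConvex m V ∧ x ∈ V ∧ V ⊆ U

section Topo
variable {M : Type*} [TopologicalSpace M] {m : M → M → M → M}

lemma med_closure_convex (hm : IsMedian m)
    (hcont : Continuous fun p : M × M × M => m p.1 p.2.1 p.2.2)
    {K : Set M} (hK : MedConvex m K) : MedConvex m (closure K) := by
  intro x hx y hy w hw
  have hw' : m x y w = w := hw
  rw [mem_closure_iff_nhds]
  intro N hN
  have hf : Continuous fun p : M × M => m p.1 p.2 w :=
    hcont.comp (continuous_fst.prodMk (continuous_snd.prodMk continuous_const))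
  have hxy : (x, y) ∈ closure (K ×ˢ K) := by
    rw [closure_prod_eq]; exact ⟨hx, hy⟩
  have hfxy : (fun p : M × M => m p.1 p.2 w) (x, y) = w := hw'
  have hpre : (fun p : M × M => m p.1 p.2 w) ⁻¹' N ∈ nhds (x, y) :=
    hf.continuousAt.preimage_mem_nhds (by simpa [hw'] using hN)
  obtain ⟨p, hp⟩ := mem_closure_iff_nhds.mp hxy _ hpre
  exact ⟨m p.1 p.2 w, hp.1, hK p.1 hp.2.1 p.2 hp.2.2 (med_f2 hm p.1 p.2 w)⟩

end Topo

theorem stmt9 {M : Type*} [TopologicalSpace M] [T2Space M] [CompactSpace M]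
    (m : M → M → M → M) (hm : IsMedian m)
    (hcont : Continuous fun p : M × M × M => m p.1 p.2.1 p.2.2)
    (hloc : LocOpenConvex m)
    (U C : Set M) (hU : IsOpen U) (hCcl : IsClosed C)
    (hUc : MedConvex m U) (hCc : MedConvex m C)
    (hUn : U.Nonempty) (hCn : C.Nonempty) (hdisj : Disjoint U C) :
    ∃ h : Set M, IsHalfSpace m h ∧ IsOpen h ∧ U ⊆ h ∧ C ⊆ hᶜ := by
  classical
  set S : Set (Set M) := {K | IsClosed K ∧ MedConvex m K ∧ C ⊆ K ∧ ∀ u ∈ U, u ∉ K} with hS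
  have hCS : C ∈ S := ⟨hCcl, hCc, subset_rfl, fun u hu hc => (Set.disjoint_left.mp hdisj hu) hc⟩
  have hchain : ∀ c ⊆ S, IsChain (· ⊆ ·) c → c.Nonempty → ∃ ub ∈ S, ∀ s ∈ c, s ⊆ ub := by
    intro c hcS hc hne
    refine ⟨closure (⋃₀ c), ⟨isClosed_closure, ?_, ?_, ?_⟩,
      fun s hs => (Set.subset_sUnion_of_mem hs).trans subset_closure⟩
    · apply med_closure_convex hm hcont
      intro x hx y hy w hw
      obtain ⟨K₁, hK₁c, hxK₁⟩ := hx
      obtain ⟨K₂, hK₂c, hyK₂⟩ := hy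
      rcases hc.total hK₁c hK₂c with h | h
      · exact ⟨K₂, hK₂c, (hcS hK₂c).2.1 x (h hxK₁) y hyK₂ hw⟩
      · exact ⟨K₁, hK₁c, (hcS hK₁c).2.1 x hxK₁ y (h hyK₂) hw⟩
    · obtain ⟨K₀, hK₀⟩ := hne
      exact ((hcS hK₀).2.2.1).trans ((Set.subset_sUnion_of_mem hK₀).trans subset_closure)
    · intro u hu hucl
      have h1 : u ∈ closure (U ∩ ⋃₀ c) := hU.inter_closure ⟨hu, hucl⟩
      have h2 : U ∩ ⋃₀ c = ∅ := by
        ext v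
        simp only [Set.mem_inter_iff, Set.mem_sUnion, Set.mem_empty_iff_false, iff_false,
          not_and, not_exists]
        rintro hvU K' hK' hvK'
        exact (hcS hK').2.2.2 v hvU hvK'
      rw [h2, closure_empty] at h1
      exact h1
  obtain ⟨K, hCK, hKmax⟩ := zorn_subset_nonempty S hchain C hCS
  obtain ⟨hKcl, hKc, hCK', hKdisj⟩ := hKmax.1
  obtain ⟨c₀, hc₀⟩ := hCn
  have hc₀K : c₀ ∈ K := hCK' hc₀
  have key : ∀ x, x ∉ K → ∃ u ∈ U, ∃ k ∈ K, m k x u = u := by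
    intro x hx
    by_contra hcon
    push_neg at hcon
    set J : Set M := {t | ∃ k ∈ K, m k x t = t} with hJ
    have hJconv : MedConvex m J := by
      rintro z₁ ⟨k₁, hk₁, hz₁⟩ z₂ ⟨k₂, hk₂, hz₂⟩ t ht
      have ht' : m z₁ z₂ t = t := ht
      exact ⟨m k₁ k₂ t, hKc k₁ hk₁ k₂ hk₂ (med_f2 hm k₁ k₂ t), med_Q2deg hm hz₁ hz₂ ht'⟩
    have hKJ : K ⊆ J := fun k hk => ⟨k, hk, med_i3 hm k x⟩
    have hxJ : x ∈ J := ⟨c₀, hc₀K, med_i2 hm c₀ x⟩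
    have hclJ : closure J ∈ S := by
      refine ⟨isClosed_closure, med_closure_convex hm hcont hJconv,
        (hCK'.trans hKJ).trans subset_closure, ?_⟩
      intro u hu hucl
      have h1 : u ∈ closure (U ∩ J) := hU.inter_closure ⟨hu, hucl⟩
      have h2 : U ∩ J = ∅ := by
        ext v
        simp only [Set.mem_inter_iff, Set.mem_empty_iff_false, iff_false, not_and]
        rintro hvU ⟨k, hk, hvk⟩
        exact hcon v hvU k hk hvk
      rw [h2, closure_empty] at h1
      exact h1
    have hKsub : K ⊆ closure J := hKJ.trans subset_closure
    exact hx (hKmax.2 hclJ hKsub (subset_closure hxJ))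
  have hKcc : MedConvex m Kᶜ := by
    intro a ha' b hb' w hw
    intro hwK
    have hw' : m a b w = w := hw
    obtain ⟨u₁, hu₁U, k₁, hk₁, h1⟩ := key a ha'
    obtain ⟨u₂, hu₂U, k₂, hk₂, h2⟩ := key b hb'
    have hQ := med_Q' hm h1 h2 hw'
    have hqU : m u₁ u₂ w ∈ U := hUc u₁ hu₁U u₂ hu₂U (med_f2 hm u₁ u₂ w)
    have hk' : m k₁ k₂ (m u₁ u₂ w) ∈ K :=
      hKc k₁ hk₁ k₂ hk₂ (med_f2 hm k₁ k₂ (m u₁ u₂ w))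
    have hqK : m u₁ u₂ w ∈ K := hKc _ hk' w hwK hQ
    exact hKdisj _ hqU hqK
  obtain ⟨u₀, hu₀⟩ := hUn
  refine ⟨Kᶜ, ⟨hKcc, ?_, ⟨u₀, hKdisj u₀ hu₀⟩, ?_⟩, hKcl.isOpen_compl,
    fun u hu => hKdisj u hu, ?_⟩
  · rw [compl_compl]; exact hKc
  · rw [compl_compl]; exact ⟨c₀, hc₀K⟩
  · rw [compl_compl]; exact hCK'
end

section
/- Let M be a second countable locally open-convex compact topological median algebra, and let C, C′ ⊆ M be disjoint nonempty closed convex sets. Then there exists an admissible half-space 𝔥 (open, with complement having nonempty interior) such that C ⊆ 𝔥 and C′ ⊆ 𝔥*. -/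
namespace Stmt10Aux

variable {M : Type*} {m : M → M → M → M}

/-! ### Pure median algebra -/

theorem med_maj2 (hm : IsMedian m) (x y : M) : m x y x = x := by
  rw [hm.1 x y x, hm.2.2.1]

theorem med_maj3 (hm : IsMedian m) (x y : M) : m x y y = y := by
  rw [hm.2.1 x y y, hm.1 y x y, hm.2.2.1]

theorem med_absorb (hm : IsMedian m) (x y z : M) : m x y (m x y z) = m x y z :=
  calc m x y (m x y z)
      = m x (m x y z) y := by rw [hm.1 x y (m x y z)]
    _ = m (m x y z) x y := by rw [hm.2.1 x (m x y z) y]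
    _ = m (m x z y) x y := by rw [hm.1 x y z]
    _ = m (m z x y) x y := by rw [hm.2.1 x z y]
    _ = m z (m x x y) (m y x y) := by rw [hm.2.2.2 z x y x y]
    _ = m z x (m y x y) := by rw [hm.2.2.1 x y]
    _ = m z x y := by rw [med_maj2 hm y x]
    _ = m x z y := by rw [hm.2.1 z x y]
    _ = m x y z := by rw [hm.1 x z y]

theorem med_trans (hm : IsMedian m) {x y u w : M} (h1 : m x y u = u) (h2 : m x u w = w) :
    m x y w = w :=
  calc m x y w
      = m y x w := by rw [hm.2.1 x y w]
    _ = m y x (m x u w) := by rw [h2]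
    _ = m y (m x x w) (m u x w) := by rw [hm.2.2.1 x w, hm.2.1 x u w]
    _ = m (m y x u) x w := by rw [hm.2.2.2 y x u x w]
    _ = m (m x y u) x w := by rw [hm.2.1 y x u]
    _ = m u x w := by rw [h1]
    _ = m x u w := by rw [hm.2.1 u x w]
    _ = w := h2

theorem med_L (hm : IsMedian m) {z c1 c2 a b : M} (h1 : m z c1 b = b) (h2 : m z c2 a = a) :
    m b c2 (m a b c1) = m a b c1 :=
  calc m b c2 (m a b c1)
      = m c2 b (m a b c1) := by rw [hm.2.1 b c2 (m a b c1)]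
    _ = m c2 (m z c1 b) (m a b c1) := by rw [h1]
    _ = m c2 (m z b c1) (m a b c1) := by rw [hm.1 z c1 b]
    _ = m (m c2 z a) b c1 := by rw [hm.2.2.2 c2 z a b c1]
    _ = m (m z c2 a) b c1 := by rw [hm.2.1 c2 z a]
    _ = m a b c1 := by rw [h2]

theorem med_S3 (hm : IsMedian m) (w : M) {p q u : M} (h : m p q u = u) :
    m w (m w p q) u = m w p q :=
  calc m w (m w p q) u
      = m w (m w p q) (m p q u) := by rw [h]
    _ = m w (m w p q) (m u p q) := by rw [hm.1 p q u, hm.2.1 p u q]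
    _ = m (m w w u) p q := by rw [hm.2.2.2 w w u p q]
    _ = m w p q := by rw [hm.2.2.1 w u]

theorem med_S1 (hm : IsMedian m) (w a b c : M) : m w (m w a b) c = m w a (m w b c) :=
  calc m w (m w a b) c
      = m (m w a b) w c := by rw [hm.2.1 w (m w a b) c]
    _ = m (m a w b) w c := by rw [hm.2.1 w a b]
    _ = m a (m w w c) (m b w c) := by rw [hm.2.2.2 a w b w c]
    _ = m a w (m b w c) := by rw [hm.2.2.1 w c]
    _ = m w a (m b w c) := by rw [hm.2.1 a w (m b w c)]
    _ = m w a (m w b c) := by rw [hm.2.1 b w c]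

theorem med_swap (hm : IsMedian m) (w a b c d : M) :
    m w (m w a b) (m w c d) = m w (m w a c) (m w b d) :=
  calc m w (m w a b) (m w c d)
      = m w a (m w b (m w c d)) := by rw [med_S1 hm w a b (m w c d)]
    _ = m w a (m w (m w b c) d) := by rw [med_S1 hm w b c d]
    _ = m w a (m w (m w c b) d) := by rw [hm.1 w b c]
    _ = m w a (m w c (m w b d)) := by rw [med_S1 hm w c b d]
    _ = m w (m w a c) (m w b d) := by rw [med_S1 hm w a c (m w b d)]

theorem med_join (hm : IsMedian m) {p1 q1 p2 q2 u v w : M}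
    (hu : m p1 q1 u = u) (hv : m p2 q2 v = v) (hw : m u v w = w) :
    m (m w p1 p2) (m w q1 q2) w = w := by
  have e1 : m w u v = w := by rw [hm.2.1 w u v, hm.1 u w v, hw]
  calc m (m w p1 p2) (m w q1 q2) w
      = m (m w p1 p2) w (m w q1 q2) := by rw [hm.1 (m w p1 p2) (m w q1 q2) w]
    _ = m w (m w p1 p2) (m w q1 q2) := by rw [hm.2.1 (m w p1 p2) w (m w q1 q2)]
    _ = m w (m w p1 q1) (m w p2 q2) := med_swap hm w p1 p2 q1 q2
    _ = m w (m w (m w p1 q1) u) (m w p2 q2) := by rw [med_S3 hm w hu]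
    _ = m w (m w (m w p1 q1) u) (m w (m w p2 q2) v) := by rw [med_S3 hm w hv]
    _ = m w (m w (m w p1 q1) (m w p2 q2)) (m w u v) :=
        med_swap hm w (m w p1 q1) u (m w p2 q2) v
    _ = m w (m w (m w p1 q1) (m w p2 q2)) w := by rw [e1]
    _ = w := med_maj2 hm w (m w (m w p1 q1) (m w p2 q2))

theorem med_mem_rev (hm : IsMedian m) (x y w : M) : m x y (m w x y) = m w x y := by
  have e : m w x y = m x y w := by rw [hm.2.1 w x y, hm.1 x w y]
  rw [e, med_absorb hm x y w]

/-! ### Convex sets and joins -/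

theorem medConvex_singleton (hm : IsMedian m) (z : M) : MedConvex m {z} := by
  intro x hx y hy u hu
  rw [Set.mem_singleton_iff] at hx hy
  have h1 : m x y u = u := hu
  rw [hx, hy, hm.2.2.1 z u] at h1
  exact Set.mem_singleton_iff.2 h1.symm

/-- The join of two sets. -/
def joinSet (m : M → M → M → M) (P Q : Set M) : Set M :=
  {t | ∃ a ∈ P, ∃ b ∈ Q, m a b t = t}

theorem joinSet_convex (hm : IsMedian m) {P Q : Set M} (hP : MedConvex m P)
    (hQ : MedConvex m Q) : MedConvex m (joinSet m P Q) := by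
  rintro x ⟨p1, hp1, q1, hq1, hx⟩ y ⟨p2, hp2, q2, hq2, hy⟩ w hw
  refine ⟨m w p1 p2, hP p1 hp1 p2 hp2 (med_mem_rev hm p1 p2 w),
    m w q1 q2, hQ q1 hq1 q2 hq2 (med_mem_rev hm q1 q2 w), ?_⟩
  exact med_join hm hx hy hw

theorem joinSet_subset_left (hm : IsMedian m) {P Q : Set M} (hQ : Q.Nonempty) :
    P ⊆ joinSet m P Q :=
  fun a ha => ⟨a, ha, hQ.choose, hQ.choose_spec, med_maj2 hm a hQ.choose⟩

theorem joinSet_subset_right (hm : IsMedian m) {P Q : Set M} (hP : P.Nonempty) :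
    Q ⊆ joinSet m P Q :=
  fun b hb => ⟨hP.choose, hP.choose_spec, b, hb, med_maj3 hm hP.choose b⟩

theorem joinSet_subset {P Q G : Set M} (hG : MedConvex m G) (hPG : P ⊆ G) (hQG : Q ⊆ G) :
    joinSet m P Q ⊆ G := by
  rintro t ⟨a, ha, b, hb, e⟩
  exact hG a (hPG ha) b (hQG hb) e

section Topology

variable [TopologicalSpace M]

theorem medConvex_closure (hm : IsMedian m)
    (hcont : Continuous fun p : M × M × M => m p.1 p.2.1 p.2.2)
    {D : Set M} (hD : MedConvex m D) : MedConvex m (closure D) := by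
  intro x hx y hy u hu
  have hc : Continuous (Function.uncurry fun a b => m a b u) := by
    exact hcont.comp (continuous_fst.prodMk (continuous_snd.prodMk continuous_const))
  have hu' : m x y u = u := hu
  have : m x y u ∈ closure D :=
    map_mem_closure₂ (f := fun a b => m a b u) hc hx hy
      (fun a ha b hb => hD a ha b hb (med_absorb hm a b u))
  rwa [hu'] at this

/-! ### Zorn -/

theorem exists_maximal_convex (hm : IsMedian m) (K V : Set M) (hK : MedConvex m K)
    (hdisj : Disjoint K V) :
    ∃ B : Set M, MedConvex m B ∧ K ⊆ B ∧ Disjoint B V ∧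
      ∀ D : Set M, MedConvex m D → Disjoint D V → B ⊆ D → D = B := by
  set S : Set (Set M) := {B | MedConvex m B ∧ K ⊆ B ∧ Disjoint B V} with hS
  have hchain : ∀ c ⊆ S, IsChain (· ⊆ ·) c → c.Nonempty →
      ∃ ub ∈ S, ∀ s ∈ c, s ⊆ ub := by
    intro c hcS hc hcne
    refine ⟨⋃₀ c, ⟨?_, ?_, ?_⟩, fun s hs => Set.subset_sUnion_of_mem hs⟩
    · intro x hx y hy w hw
      obtain ⟨B1, hB1, hxB1⟩ := hx
      obtain ⟨B2, hB2, hyB2⟩ := hy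
      rcases eq_or_ne B1 B2 with rfl | hne
      · exact Set.subset_sUnion_of_mem hB1 ((hcS hB1).1 x hxB1 y hyB2 hw)
      · rcases hc hB1 hB2 hne with h12 | h21
        · exact Set.subset_sUnion_of_mem hB2 ((hcS hB2).1 x (h12 hxB1) y hyB2 hw)
        · exact Set.subset_sUnion_of_mem hB1 ((hcS hB1).1 x hxB1 y (h21 hyB2) hw)
    · obtain ⟨B0, hB0⟩ := hcne
      exact (hcS hB0).2.1.trans (Set.subset_sUnion_of_mem hB0)
    · exact Set.disjoint_sUnion_left.2 fun s hs => (hcS hs).2.2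
  obtain ⟨B, hKB, hBmax⟩ := zorn_subset_nonempty S hchain K ⟨hK, subset_rfl, hdisj⟩
  exact ⟨B, hBmax.1.1, hKB, hBmax.1.2.2,
    fun D hDc hDV hBD => subset_antisymm (hBmax.2 ⟨hDc, hKB.trans hBD, hDV⟩ hBD) hBD⟩

/-! ### Separating a point from a closed convex set by an open half-space -/

theorem aux1 (hm : IsMedian m)
    (hcont : Continuous fun p : M × M × M => m p.1 p.2.1 p.2.2)
    (hloc : LocOpenConvex m)
    (K : Set M) (hKcl : IsClosed K) (hKc : MedConvex m K) (hKne : K.Nonempty)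
    (x : M) (hx : x ∉ K) :
    ∃ A : Set M, IsOpen A ∧ MedConvex m A ∧ MedConvex m Aᶜ ∧ x ∈ A ∧ K ⊆ Aᶜ := by
  obtain ⟨V, hVo, hVc, hxV, hVK⟩ := hloc x Kᶜ (hKcl.isOpen_compl.mem_nhds hx)
  have hKV : Disjoint K V := Set.disjoint_left.2 fun t ht htV => hVK htV ht
  obtain ⟨B, hBc, hKB, hBV, hBmax⟩ := exists_maximal_convex hm K V hKc hKV
  -- B is closed
  have hBcl : IsClosed B := by
    have hsub : closure B ⊆ Vᶜ :=
      closure_minimal (Set.disjoint_left.1 hBV) hVo.isClosed_compl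
    have := hBmax (closure B) (medConvex_closure hm hcont hBc)
      (Set.disjoint_left.2 fun t ht => hsub ht) subset_closure
    rw [← this]; exact isClosed_closure
  obtain ⟨A, hAc, hVA, hAB, hAmax⟩ :=
    exists_maximal_convex hm V B hVc (Set.disjoint_right.2 (Set.disjoint_left.1 hBV))
  have hAne : A.Nonempty := ⟨x, hVA hxV⟩
  have hBne : B.Nonempty := ⟨hKne.choose, hKB hKne.choose_spec⟩
  -- A ∪ B = univ
  have huniv : ∀ z, z ∈ A ∨ z ∈ B := by
    intro z
    by_cases hzA : z ∈ A
    · exact Or.inl hzA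
    by_cases hzB : z ∈ B
    · exact Or.inr hzB
    exfalso
    -- join of z with A meets B
    have hJA : ¬ Disjoint (joinSet m ({z} : Set M) A) B := by
      intro hd
      have := hAmax (joinSet m ({z} : Set M) A)
        (joinSet_convex hm (medConvex_singleton hm z) hAc) hd
        (joinSet_subset_right hm ⟨z, rfl⟩)
      exact hzA (this ▸ joinSet_subset_left hm hAne rfl)
    obtain ⟨β, hβJ, hβB⟩ := Set.not_disjoint_iff.1 hJA
    obtain ⟨z', hz', α, hαA, hβe⟩ := hβJ
    rw [Set.mem_singleton_iff] at hz'
    rw [hz'] at hβe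
    -- join of z with B meets V
    have hJB : ¬ Disjoint (joinSet m ({z} : Set M) B) V := by
      intro hd
      have := hBmax (joinSet m ({z} : Set M) B)
        (joinSet_convex hm (medConvex_singleton hm z) hBc) hd
        (joinSet_subset_right hm ⟨z, rfl⟩)
      exact hzB (this ▸ joinSet_subset_left hm hBne rfl)
    obtain ⟨α', hα'J, hα'V⟩ := Set.not_disjoint_iff.1 hJB
    obtain ⟨z'', hz'', β', hβ'B, hα'e⟩ := hα'J
    rw [Set.mem_singleton_iff] at hz''
    rw [hz''] at hα'e
    -- the point s lies in both A and B
    have hsB : m α' β α ∈ B := hBc β hβB β' hβ'B (med_L hm hβe hα'e)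
    have hsA : m α' β α ∈ A := by
      have e : m α' β α = m α' α β := hm.1 α' β α
      exact hAc α' (hVA hα'V) α hαA (by rw [e]; exact med_absorb hm α' α β)
    exact Set.disjoint_left.1 hAB hsA hsB
  have hAeq : A = Bᶜ := by
    ext z
    constructor
    · exact fun hz hzB => Set.disjoint_left.1 hAB hz hzB
    · intro hz
      rcases huniv z with h | h
      · exact h
      · exact absurd h hz
  refine ⟨A, ?_, hAc, ?_, hVA hxV, ?_⟩
  · rw [hAeq]; exact hBcl.isOpen_compl
  · have : Aᶜ = B := by rw [hAeq, compl_compl]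
    rw [this]; exact hBc
  · intro t ht
    have : t ∈ B := hKB ht
    rw [hAeq, compl_compl]; exact this

/-! ### Selection lemma -/

theorem select_aux (hm : IsMedian m) {C : Set M} (hC : MedConvex m C) (hne : C.Nonempty)
    {ι : Type*} (A : ι → Set M) (hA : ∀ i, MedConvex m (A i)ᶜ) {c' : M}
    (hc' : ∀ i, c' ∉ A i) (s : Finset ι) (hwit : ∀ i ∈ s, ∃ t ∈ C, t ∉ A i) :
    ∃ y ∈ C, ∀ i ∈ s, y ∉ A i := by
  classical
  induction s using Finset.induction_on with
  | empty => exact ⟨hne.choose, hne.choose_spec, by simp⟩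
  | @insert a t hat IH =>
    obtain ⟨y, hyC, hy⟩ := IH fun i hi => hwit i (Finset.mem_insert_of_mem hi)
    obtain ⟨xa, hxaC, hxa⟩ := hwit a (Finset.mem_insert_self a t)
    refine ⟨m y xa c', hC y hyC xa hxaC (med_absorb hm y xa c'), ?_⟩
    intro i hi
    rcases Finset.mem_insert.1 hi with rfl | hit
    · -- m y xa c' ∈ [xa, c'] ⊆ (A i)ᶜ
      have e : m y xa c' = m xa c' y := by rw [hm.2.1 y xa c', hm.1 xa y c']
      have : m xa c' (m y xa c') = m y xa c' := by
        rw [e]; exact med_absorb hm xa c' y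
      exact hA i xa hxa c' (hc' i) this
    · have e : m y xa c' = m y c' xa := by rw [hm.1 y xa c']
      have : m y c' (m y xa c') = m y xa c' := by
        rw [e]; exact med_absorb hm y c' xa
      exact hA i y (hy i hit) c' (hc' i) this

theorem select (hm : IsMedian m) {C : Set M} (hC : MedConvex m C) (hne : C.Nonempty)
    {ι : Type*} (A : ι → Set M) (hA : ∀ i, MedConvex m (A i)ᶜ) {c' : M}
    (hc' : ∀ i, c' ∉ A i) (s : Finset ι) (hcov : C ⊆ ⋃ i ∈ s, A i) :
    ∃ i ∈ s, C ⊆ A i := by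
  by_contra hcon
  push_neg at hcon
  have hwit : ∀ i ∈ s, ∃ t ∈ C, t ∉ A i := by
    intro i hi
    obtain ⟨t, htC, htA⟩ := Set.not_subset.1 (hcon i hi)
    exact ⟨t, htC, htA⟩
  obtain ⟨y, hyC, hy⟩ := select_aux hm hC hne A hA hc' s hwit
  obtain ⟨i, hi, hyA⟩ := Set.mem_iUnion₂.1 (hcov hyC)
  exact hy i hi hyA

/-! ### Separating two disjoint closed convex sets -/

theorem aux2 [T2Space M] [CompactSpace M] (hm : IsMedian m)
    (hcont : Continuous fun p : M × M × M => m p.1 p.2.1 p.2.2)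
    (hloc : LocOpenConvex m)
    (D E : Set M) (hDcl : IsClosed D) (hEcl : IsClosed E)
    (hDc : MedConvex m D) (hEc : MedConvex m E)
    (hDne : D.Nonempty) (hEne : E.Nonempty) (hdisj : Disjoint D E) :
    ∃ A : Set M, IsOpen A ∧ MedConvex m A ∧ MedConvex m Aᶜ ∧ D ⊆ A ∧ E ⊆ Aᶜ := by
  have hsep : ∀ x : M, x ∈ D →
      ∃ A : Set M, IsOpen A ∧ MedConvex m A ∧ MedConvex m Aᶜ ∧ x ∈ A ∧ E ⊆ Aᶜ :=
    fun x hx => aux1 hm hcont hloc E hEcl hEc hEne x (Set.disjoint_left.1 hdisj hx)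
  choose! A hAo hAc hAcc hxA hEA using hsep
  have hDcp : IsCompact D := hDcl.isCompact
  have hcov : D ⊆ ⋃ x : D, A x := fun t ht => Set.mem_iUnion.2 ⟨⟨t, ht⟩, hxA t ht⟩
  obtain ⟨s, hs⟩ := hDcp.elim_finite_subcover (fun x : D => A x) (fun x => hAo x x.2) hcov
  have hc' : ∀ i : D, hEne.choose ∉ A i :=
    fun i hmem => hEA i i.2 hEne.choose_spec hmem
  obtain ⟨i, hi, hDA⟩ := select hm hDc hDne (fun x : D => A x)
    (fun i => hAcc i i.2) hc' s hs
  exact ⟨A i, hAo i i.2, hAc i i.2, hAcc i i.2, hDA, fun t ht => hEA i i.2 ht⟩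

end Topology

end Stmt10Aux

theorem stmt10 {M : Type*} [TopologicalSpace M] [T2Space M] [CompactSpace M]
    [SecondCountableTopology M]
    (m : M → M → M → M) (hm : IsMedian m)
    (hcont : Continuous fun p : M × M × M => m p.1 p.2.1 p.2.2)
    (hloc : LocOpenConvex m)
    (C C' : Set M) (hCcl : IsClosed C) (hC'cl : IsClosed C')
    (hCc : MedConvex m C) (hC'c : MedConvex m C')
    (hCn : C.Nonempty) (hC'n : C'.Nonempty) (hdisj : Disjoint C C') :
    ∃ h : Set M, IsHalfSpace m h ∧ IsOpen h ∧ (interior hᶜ).Nonempty ∧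
      C ⊆ h ∧ C' ⊆ hᶜ := by
  -- Step 1: an open half-space g around C' avoiding C
  obtain ⟨g, hgo, hgc, hgcc, hC'g, hCg⟩ :=
    Stmt10Aux.aux2 hm hcont hloc C' C hC'cl hCcl hC'c hCc hC'n hCn hdisj.symm
  obtain ⟨c', hc'C'⟩ := hC'n
  -- Step 2: a small open convex W around c' whose closure stays in g
  have hgnhds : g ∈ nhds c' := hgo.mem_nhds (hC'g hc'C')
  obtain ⟨F, hFnhds, hFcl, hFg⟩ := exists_mem_nhds_isClosed_subset hgnhds
  obtain ⟨W, hWo, hWc, hc'W, hWF⟩ := hloc c' F hFnhds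
  have hclWg : closure W ⊆ g := (closure_minimal hWF hFcl).trans hFg
  -- Step 3: fatten C' by joining with closure W
  set K := Stmt10Aux.joinSet m C' (closure W) with hK
  have hKc : MedConvex m K := Stmt10Aux.joinSet_convex hm hC'c (Stmt10Aux.medConvex_closure hm hcont hWc)
  have hC'K : C' ⊆ K := Stmt10Aux.joinSet_subset_left hm ⟨c', subset_closure hc'W⟩
  have hWK : closure W ⊆ K := Stmt10Aux.joinSet_subset_right hm ⟨c', hc'C'⟩
  have hKg : K ⊆ g := Stmt10Aux.joinSet_subset hgc hC'g hclWg
  have hKC : Disjoint C K :=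
    Set.disjoint_left.2 fun t htC htK => hCg htC (hKg htK)
  have hKne : K.Nonempty := ⟨c', hC'K hc'C'⟩
  -- K is closed (continuous image of a compact set)
  have hKcl : IsClosed K := by
    set S : Set (M × M × M) :=
      (Prod.fst ⁻¹' C') ∩ ((fun p : M × M × M => p.2.1) ⁻¹' closure W) ∩
        {p : M × M × M | m p.1 p.2.1 p.2.2 = p.2.2} with hSdef
    have hScl : IsClosed S :=
      ((hC'cl.preimage continuous_fst).inter
        (isClosed_closure.preimage (continuous_fst.comp continuous_snd))).inter
        (isClosed_eq hcont (continuous_snd.comp continuous_snd))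
    have hScp : IsCompact S := hScl.isCompact
    have hKeq : K = (fun p : M × M × M => p.2.2) '' S := by
      ext t
      constructor
      · rintro ⟨a, ha, b, hb, e⟩
        exact ⟨(a, b, t), ⟨⟨ha, hb⟩, e⟩, rfl⟩
      · rintro ⟨⟨a, b, t'⟩, ⟨⟨ha, hb⟩, e⟩, rfl⟩
        exact ⟨a, ha, b, hb, e⟩
    rw [hKeq]
    exact (hScp.image (continuous_snd.comp continuous_snd)).isClosed
  -- Step 4: separate C from K by an open half-space h
  obtain ⟨h, hho, hhc, hhcc, hCh, hKh⟩ :=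
    Stmt10Aux.aux2 hm hcont hloc C K hCcl hKcl hCc hKc hCn hKne hKC
  have hC'h : C' ⊆ hᶜ := fun t ht => hKh (hC'K ht)
  refine ⟨h, ⟨hhc, hhcc, ⟨hCn.choose, hCh hCn.choose_spec⟩, ⟨c', hC'h hc'C'⟩⟩, hho, ?_,
    hCh, hC'h⟩
  -- interior hᶜ contains W
  refine ⟨c', ?_⟩
  have hWh : W ⊆ hᶜ := fun t ht => hKh (hWK (subset_closure ht))
  exact interior_maximal hWh hWo hc'W
end

section
/- Let M be a median algebra with a σ-algebra making m Borel-measurable, let μ be a balanced probability measure on M, and let 𝔥 be a measurable half-space of M. Then μ(𝔥) ∈ {0, 1/2, 1}. -/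
open MeasureTheory

noncomputable def selfMedian {M : Type*} [MeasurableSpace M] (m : M → M → M → M)
    (μ : Measure M) : Measure M :=
  Measure.map (fun p : M × M × M => m p.1 p.2.1 p.2.2) (μ.prod (μ.prod μ))

section Aux

variable {M : Type*} (m : M → M → M → M)

lemma med_absorb (hm : IsMedian m) (x y z : M) : m x y (m x y z) = m x y z := by
  obtain ⟨c1, c2, idem, dist⟩ := hm
  have h1 := dist x x y y z
  rw [idem] at h1
  rw [idem] at h1
  -- h1 : m x y z = m x (m x y z) y
  calc m x y (m x y z) = m x (m x y z) y := c1 x y (m x y z)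
    _ = m x y z := h1.symm

lemma med_pair_mem (hm : IsMedian m) {C : Set M} (hC : MedConvex m C)
    {x y : M} (hx : x ∈ C) (hy : y ∈ C) (z : M) : m x y z ∈ C :=
  hC x hx y hy (med_absorb m hm x y z)

lemma med_two_mem (hm : IsMedian m) {C : Set M} (hC : MedConvex m C) :
    ∀ x y z, ((x ∈ C ∧ y ∈ C) ∨ (x ∈ C ∧ z ∈ C) ∨ (y ∈ C ∧ z ∈ C)) → m x y z ∈ C := by
  obtain ⟨c1, c2, idem, dist⟩ := id hm
  rintro x y z (⟨hx, hy⟩ | ⟨hx, hz⟩ | ⟨hy, hz⟩)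
  · exact med_pair_mem m hm hC hx hy z
  · have h1 := med_pair_mem m hm hC hx hz y
    rw [show m x y z = m x z y from c1 x y z]
    exact h1
  · have h1 := med_pair_mem m hm hC hy hz x
    rw [show m x y z = m y z x from (c2 x y z).trans (c1 y x z)]
    exact h1

lemma med_mem_char (hm : IsMedian m) {h : Set M} (hhs : IsHalfSpace m h) (x y z : M) :
    m x y z ∈ h ↔ ((x ∈ h ∧ y ∈ h) ∨ (x ∈ h ∧ z ∈ h) ∨ (y ∈ h ∧ z ∈ h)) := by
  obtain ⟨hconv, hconvc, -, -⟩ := hhs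
  constructor
  · intro hmem
    by_contra hcon
    have h2 : ((x ∈ hᶜ ∧ y ∈ hᶜ) ∨ (x ∈ hᶜ ∧ z ∈ hᶜ) ∨ (y ∈ hᶜ ∧ z ∈ hᶜ)) := by
      simp only [Set.mem_compl_iff]; tauto
    exact med_two_mem m hm hconvc x y z h2 hmem
  · exact med_two_mem m hm hconv x y z

end Aux

theorem stmt12 {M : Type*} [MeasurableSpace M]
    (m : M → M → M → M) (hm : IsMedian m)
    (hmeas : Measurable fun p : M × M × M => m p.1 p.2.1 p.2.2)
    (μ : Measure M) [IsProbabilityMeasure μ] (hbal : selfMedian m μ = μ)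
    (h : Set M) (hhs : IsHalfSpace m h) (hhm : MeasurableSet h) :
    μ h = 0 ∨ μ h = (2 : ENNReal)⁻¹ ∨ μ h = 1 := by
  set S : Set (M × M × M) := (fun p : M × M × M => m p.1 p.2.1 p.2.2) ⁻¹' h with hS
  have hmap : μ h = (μ.prod (μ.prod μ)) S := by
    conv_lhs => rw [← hbal]
    rw [selfMedian, Measure.map_apply hmeas hhm]
  have hSeq : S = (h ×ˢ (h ×ˢ h)) ∪ ((h ×ˢ (h ×ˢ hᶜ)) ∪ ((h ×ˢ (hᶜ ×ˢ h)) ∪ (hᶜ ×ˢ (h ×ˢ h)))) := by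
    ext ⟨x, y, z⟩
    simp only [hS, Set.mem_preimage, Set.mem_union, Set.mem_prod, Set.mem_compl_iff]
    rw [med_mem_char m hm hhs x y z]
    tauto
  have hm1 : MeasurableSet (h ×ˢ (h ×ˢ h) : Set (M × M × M)) := hhm.prod (hhm.prod hhm)
  have hm2 : MeasurableSet (h ×ˢ (h ×ˢ hᶜ) : Set (M × M × M)) := hhm.prod (hhm.prod hhm.compl)
  have hm3 : MeasurableSet (h ×ˢ (hᶜ ×ˢ h) : Set (M × M × M)) := hhm.prod (hhm.compl.prod hhm)
  have hm4 : MeasurableSet (hᶜ ×ˢ (h ×ˢ h) : Set (M × M × M)) := hhm.compl.prod (hhm.prod hhm)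
  have hd34 : Disjoint (h ×ˢ (hᶜ ×ˢ h) : Set (M × M × M)) (hᶜ ×ˢ (h ×ˢ h)) := by
    rw [Set.disjoint_left]
    rintro ⟨x, y, z⟩ ⟨hx, _, _⟩ ⟨hx', _, _⟩
    exact hx' hx
  have hd2 : Disjoint (h ×ˢ (h ×ˢ hᶜ) : Set (M × M × M)) ((h ×ˢ (hᶜ ×ˢ h)) ∪ (hᶜ ×ˢ (h ×ˢ h))) := by
    rw [Set.disjoint_left]
    rintro ⟨x, y, z⟩ ⟨hx, hy, hz⟩ (⟨hx', hy', hz'⟩ | ⟨hx', hy', hz'⟩)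
    · exact hy' hy
    · exact hx' hx
  have hd1 : Disjoint (h ×ˢ (h ×ˢ h) : Set (M × M × M))
      ((h ×ˢ (h ×ˢ hᶜ)) ∪ ((h ×ˢ (hᶜ ×ˢ h)) ∪ (hᶜ ×ˢ (h ×ˢ h)))) := by
    rw [Set.disjoint_left]
    rintro ⟨x, y, z⟩ ⟨hx, hy, hz⟩ (⟨hx', hy', hz'⟩ | ⟨hx', hy', hz'⟩ | ⟨hx', hy', hz'⟩)
    · exact hz' hz
    · exact hy' hy
    · exact hx' hx
  have hmeasure' : (μ.prod (μ.prod μ)) S = μ h * (μ h * μ h) + (μ h * (μ h * μ hᶜ) +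
      (μ h * (μ hᶜ * μ h) + μ hᶜ * (μ h * μ h))) := by
    rw [hSeq, measure_union hd1 (hm2.union (hm3.union hm4)),
        measure_union hd2 (hm3.union hm4),
        measure_union hd34 hm4]
    simp only [Measure.prod_prod]
  have hmeasure := hmap.trans hmeasure'
  -- pass to real numbers
  set a : ℝ := (μ h).toReal with ha
  set b : ℝ := (μ hᶜ).toReal with hb
  have hfin : μ h ≠ ⊤ := measure_ne_top μ h
  have hfinc : μ hᶜ ≠ ⊤ := measure_ne_top μ hᶜ
  have hab : a + b = 1 := by
    rw [ha, hb, ← ENNReal.toReal_add hfin hfinc, measure_add_measure_compl hhm]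
    simp
  have f1 : μ h * (μ h * μ h) ≠ ⊤ := ENNReal.mul_ne_top hfin (ENNReal.mul_ne_top hfin hfin)
  have f2 : μ h * (μ h * μ hᶜ) ≠ ⊤ := ENNReal.mul_ne_top hfin (ENNReal.mul_ne_top hfin hfinc)
  have f3 : μ h * (μ hᶜ * μ h) ≠ ⊤ := ENNReal.mul_ne_top hfin (ENNReal.mul_ne_top hfinc hfin)
  have f4 : μ hᶜ * (μ h * μ h) ≠ ⊤ := ENNReal.mul_ne_top hfinc (ENNReal.mul_ne_top hfin hfin)
  have hreal : a = a * (a * a) + (a * (a * b) + (a * (b * a) + b * (a * a))) := by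
    have := congrArg ENNReal.toReal hmeasure
    rw [ENNReal.toReal_add f1 (ENNReal.add_ne_top.2 ⟨f2, ENNReal.add_ne_top.2 ⟨f3, f4⟩⟩),
        ENNReal.toReal_add f2 (ENNReal.add_ne_top.2 ⟨f3, f4⟩),
        ENNReal.toReal_add f3 f4] at this
    simpa only [ENNReal.toReal_mul] using this
  have hb' : b = 1 - a := by linarith
  rw [hb'] at hreal
  have hpoly : a * ((2 * a - 1) * (a - 1)) = 0 := by linear_combination hreal
  rcases mul_eq_zero.1 hpoly with h0 | h12
  · left
    have : μ h = 0 ∨ μ h = ⊤ := by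
      rcases ENNReal.toReal_eq_zero_iff (μ h) |>.1 h0 with h' | h'
      · exact Or.inl h'
      · exact Or.inr h'
    tauto
  · rcases mul_eq_zero.1 h12 with h2 | h1
    · right; left
      have ha' : a = 1 / 2 := by linarith
      have hne2 : ((2 : ENNReal)⁻¹) ≠ ⊤ := by simp
      refine (ENNReal.toReal_eq_toReal_iff' hfin hne2).1 ?_
      rw [← ha, ha']
      simp [ENNReal.toReal_inv]
    · right; right
      have ha' : a = 1 := by linarith
      have hne1 : (1 : ENNReal) ≠ ⊤ := by simp
      refine (ENNReal.toReal_eq_toReal_iff' hfin hne1).1 ?_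
      rw [← ha, ha']; simp
end
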